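/- arXiv:0901.3764 — 6 statements merged into one kernel-verified Lean document; each statement's English description precedes it below -/
import Mathlib

section
/- Let A ∈ ℂ^{n×n} and B ∈ ℂ^{n×m}. The controllability matrix [B, AB, ..., A^{n-1}B] has rank n if and only if for every λ ∈ ℂ, the only vector p ∈ ℂ^n satisfying pᵀA = λpᵀ and pᵀB = 0 is p = 0. -/
open Matrix

/-- The controllability matrix `[B, AB, ..., A^(n-1)B]` of a pair `(A, B)`. -/
noncomputable def ctrbMatrix {n m : ℕ} (A : Matrix (Fin n) (Fin n) ℂ)
    (B : Matrix (Fin n) (Fin m) ℂ) : Matrix (Fin n) (Fin n × Fin m) ℂ :=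
  Matrix.of fun i kj => (A ^ (kj.1 : ℕ) * B) i kj.2

open Polynomial in

/-- vecMul commutes with finite sums of matrices. -/
lemma vecMul_sum_matrix {n m : ℕ} {ι : Type*} (s : Finset ι)
    (f : ι → Matrix (Fin n) (Fin m) ℂ) (p : Fin n → ℂ) :
    p ᵥ* (∑ j ∈ s, f j) = ∑ j ∈ s, p ᵥ* f j := by
  funext j'
  simp only [vecMul, dotProduct, Finset.sum_apply, Finset.mul_sum, Matrix.sum_apply]
  rw [Finset.sum_comm]

lemma vecMul_smul_matrix {n m : ℕ} (c : ℂ) (M : Matrix (Fin n) (Fin m) ℂ) (p : Fin n → ℂ) :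
    p ᵥ* (c • M) = c • (p ᵥ* M) := by
  funext j'
  simp [vecMul, dotProduct, Finset.mul_sum, mul_left_comm]

lemma vecMul_ctrb_eq_zero_iff {n m : ℕ} (A : Matrix (Fin n) (Fin n) ℂ)
    (B : Matrix (Fin n) (Fin m) ℂ) (p : Fin n → ℂ) :
    p ᵥ* ctrbMatrix A B = 0 ↔ ∀ k : Fin n, p ᵥ* (A ^ (k : ℕ) * B) = 0 := by
  constructor
  · intro h k
    funext j
    have := congrFun h (k, j)
    simpa [ctrbMatrix, vecMul, dotProduct] using this
  · intro h
    funext kj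
    have := congrFun (h kj.1) kj.2
    simpa [ctrbMatrix, vecMul, dotProduct] using this

open Polynomial in
/-- If `p` annihilates `A^k B` for `k < n`, it annihilates all powers, by Cayley–Hamilton. -/
lemma vecMul_pow_mul_eq_zero {n m : ℕ} (A : Matrix (Fin n) (Fin n) ℂ)
    (B : Matrix (Fin n) (Fin m) ℂ) (p : Fin n → ℂ)
    (h : ∀ k : Fin n, p ᵥ* (A ^ (k : ℕ) * B) = 0) (k : ℕ) :
    p ᵥ* (A ^ k * B) = 0 := by
  have hmonic := A.charpoly_monic
  have hch : aeval A A.charpoly = 0 := A.aeval_self_charpoly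
  set r : ℂ[X] := (X ^ k : ℂ[X]) %ₘ A.charpoly with hr
  have hAk : aeval A r = A ^ k := by
    rw [hr, aeval_modByMonic_eq_self_of_root hch, aeval_X_pow]
  have hdeg : ∀ j, n ≤ j → r.coeff j = 0 := by
    intro j hj
    apply coeff_eq_zero_of_degree_lt
    calc r.degree < A.charpoly.degree := degree_modByMonic_lt _ hmonic
      _ = (Fintype.card (Fin n) : ℕ) := A.charpoly_degree_eq_dim
      _ ≤ (j : WithBot ℕ) := by
          rw [Fintype.card_fin]
          exact_mod_cast hj
  have hsum : aeval A r = ∑ j ∈ Finset.range (r.natDegree + 1), r.coeff j • A ^ j :=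
    aeval_eq_sum_range A
  have : A ^ k * B = ∑ j ∈ Finset.range (r.natDegree + 1), r.coeff j • (A ^ j * B) := by
    rw [← hAk, hsum, Matrix.sum_mul]
    simp [smul_mul_assoc]
  rw [this, vecMul_sum_matrix]
  apply Finset.sum_eq_zero
  intro j _
  rw [vecMul_smul_matrix]
  by_cases hjn : j < n
  · rw [show (j : ℕ) = ((⟨j, hjn⟩ : Fin n) : ℕ) from rfl, h ⟨j, hjn⟩, smul_zero]
  · rw [hdeg j (le_of_not_gt hjn), zero_smul]

/-- Full row rank is equivalent to trivial left kernel. -/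
lemma rank_eq_card_rows_iff_vecMul {n : ℕ} {K : Type*} [Fintype K] (C : Matrix (Fin n) K ℂ) :
    C.rank = n ↔ ∀ p : Fin n → ℂ, p ᵥ* C = 0 → p = 0 := by
  have hrn : Cᵀ.rank + Module.finrank ℂ (LinearMap.ker Cᵀ.mulVecLin) = n := by
    have := LinearMap.finrank_range_add_finrank_ker Cᵀ.mulVecLin
    rwa [Module.finrank_fin_fun] at this
  rw [← C.rank_transpose]
  constructor
  · intro hrank p hp
    have hker : Module.finrank ℂ (LinearMap.ker Cᵀ.mulVecLin) = 0 := by omega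
    have hbot : LinearMap.ker Cᵀ.mulVecLin = ⊥ := Submodule.finrank_eq_zero.mp hker
    have hmem : p ∈ LinearMap.ker Cᵀ.mulVecLin := by
      rw [LinearMap.mem_ker, mulVecLin_apply, mulVec_transpose, hp]
    rw [hbot] at hmem
    simpa using hmem
  · intro h
    have hbot : LinearMap.ker Cᵀ.mulVecLin = ⊥ := by
      rw [LinearMap.ker_eq_bot']
      intro p hp
      exact h p (by rwa [mulVecLin_apply, mulVec_transpose] at hp)
    rw [hbot] at hrn
    simpa using hrn

theorem controllable_iff_no_left_eigenvector_orthogonal_to_B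
    {n m : ℕ} (A : Matrix (Fin n) (Fin n) ℂ) (B : Matrix (Fin n) (Fin m) ℂ) :
    (ctrbMatrix A B).rank = n ↔
      ∀ (lam : ℂ) (p : Fin n → ℂ), p ᵥ* A = lam • p → p ᵥ* B = 0 → p = 0 := by
  rw [rank_eq_card_rows_iff_vecMul]
  constructor
  · -- full rank → PBH
    intro h lam p hA hB
    apply h p
    rw [vecMul_ctrb_eq_zero_iff]
    intro k
    have hpow : ∀ j : ℕ, p ᵥ* (A ^ j) = lam ^ j • p := by
      intro j
      induction j with
      | zero => simp
      | succ j ih =>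
          rw [pow_succ, ← vecMul_vecMul, ih, smul_vecMul, hA, smul_smul, pow_succ]
    rw [← vecMul_vecMul, hpow, smul_vecMul, hB, smul_zero]
  · -- PBH → full rank
    intro h p hp
    by_contra hp0
    -- The left-unannihilated subspace
    set N : Submodule ℂ (Fin n → ℂ) :=
      { carrier := {q | ∀ k : ℕ, q ᵥ* (A ^ k * B) = 0}
        add_mem' := fun {a b} ha hb k => by rw [add_vecMul, ha k, hb k, add_zero]
        zero_mem' := fun k => zero_vecMul _
        smul_mem' := fun c {a} ha k => by rw [smul_vecMul, ha k, smul_zero] } with hN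
    have hpN : p ∈ N :=
      vecMul_pow_mul_eq_zero A B p ((vecMul_ctrb_eq_zero_iff A B p).mp hp)
    haveI : Nontrivial N := nontrivial_of_ne ⟨p, hpN⟩ 0 (by simpa using hp0)
    -- A acts on N from the right
    let f : N →ₗ[ℂ] N :=
      { toFun := fun q => ⟨(q : Fin n → ℂ) ᵥ* A, fun k => by
          rw [vecMul_vecMul, ← Matrix.mul_assoc, ← pow_succ']
          exact q.2 (k + 1)⟩
        map_add' := fun a b => Subtype.ext (by simp [Matrix.add_vecMul])
        map_smul' := fun c a => Subtype.ext (by simp [Matrix.smul_vecMul]) }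
    obtain ⟨μ, hμ⟩ := Module.End.exists_eigenvalue f
    obtain ⟨v, hv⟩ := hμ.exists_hasEigenvector
    have hvA : (v : Fin n → ℂ) ᵥ* A = μ • (v : Fin n → ℂ) := by
      have := hv.apply_eq_smul
      exact congrArg Subtype.val this
    have hvB : (v : Fin n → ℂ) ᵥ* B = 0 := by
      have := v.2 0
      simpa using this
    have hv0 : (v : Fin n → ℂ) = 0 := h μ v hvA hvB
    exact hv.2 (Subtype.ext hv0)
end

section
/- Let A ∈ ℂ^{n×n} and B ∈ ℂ^{n×m}. The controllability matrix [B, AB, ..., A^{n-1}B] has rank n if and only if rank [zI − A, B] = n for every complex scalar z. -/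
open Matrix

private lemma rank_eq_card_rows_iff' {n : ℕ} {p : Type*} [Fintype p] (M : Matrix (Fin n) p ℂ) :
    M.rank = n ↔ ∀ v : Fin n → ℂ, v ᵥ* M = 0 → v = 0 := by
  have h1 : M.rank = Module.finrank ℂ (LinearMap.range M.vecMulLinear) := by
    rw [← Matrix.rank_transpose, Matrix.rank, Matrix.mulVecLin_transpose]
  have h2 := LinearMap.finrank_range_add_finrank_ker (M.vecMulLinear)
  have hfd : Module.finrank ℂ (Fin n → ℂ) = n := by simp
  rw [hfd] at h2
  constructor
  · intro h v hv
    have hker : LinearMap.ker M.vecMulLinear = ⊥ := by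
      rw [h1] at h; rw [h] at h2
      have : Module.finrank ℂ (LinearMap.ker M.vecMulLinear) = 0 := by omega
      exact Submodule.finrank_eq_zero.mp this
    have := LinearMap.ker_eq_bot.mp hker
    exact this (by simpa using hv)
  · intro h
    have hker : LinearMap.ker M.vecMulLinear = ⊥ := by
      rw [LinearMap.ker_eq_bot']
      intro v hv
      exact h v (by simpa using hv)
    rw [h1]
    rw [hker] at h2
    simp at h2
    omega

private lemma vecMul_csmul {n p : ℕ} (c : ℂ) (M : Matrix (Fin n) (Fin p) ℂ) (v : Fin n → ℂ) :
    v ᵥ* (c • M) = c • (v ᵥ* M) := by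
  ext j
  simp [Matrix.vecMul, dotProduct, Finset.mul_sum, mul_left_comm]

private lemma vecMul_finset_sum {n p : ℕ} {ι : Type*} (s : Finset ι)
    (M : ι → Matrix (Fin n) (Fin p) ℂ) (v : Fin n → ℂ) :
    v ᵥ* (∑ i ∈ s, M i) = ∑ i ∈ s, v ᵥ* (M i) := by
  ext j
  simp only [Matrix.vecMul, dotProduct, Finset.sum_apply, Matrix.sum_apply, Finset.mul_sum]
  rw [Finset.sum_comm]

private lemma vecMul_pow_ext {n m : ℕ} (A : Matrix (Fin n) (Fin n) ℂ)
    (B : Matrix (Fin n) (Fin m) ℂ) (v : Fin n → ℂ)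
    (h : ∀ k < n, v ᵥ* (A ^ k * B) = 0) : ∀ k, v ᵥ* (A ^ k * B) = 0 := by
  rcases Nat.eq_zero_or_pos n with rfl | hn
  · intro k
    have : v = 0 := Subsingleton.elim _ _
    simp [this, Matrix.zero_vecMul]
  have hd : A.charpoly.natDegree = n := by
    simpa using Matrix.charpoly_natDegree_eq_dim A
  have hA : A ^ n = -∑ i ∈ Finset.range n, (A.charpoly.coeff i) • A ^ i := by
    have h0 := Matrix.aeval_self_charpoly A
    rw [Polynomial.aeval_eq_sum_range' (by omega : A.charpoly.natDegree < n + 1)] at h0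
    rw [Finset.sum_range_succ] at h0
    have hc : A.charpoly.coeff n = 1 := by
      have hm := A.charpoly_monic
      rw [Polynomial.Monic.def, Polynomial.leadingCoeff, hd] at hm
      exact hm
    rw [hc, one_smul] at h0
    exact eq_neg_of_add_eq_zero_left (by rw [add_comm]; exact h0)
  intro k
  induction k using Nat.strong_induction_on with
  | _ k ih =>
    by_cases hk : k < n
    · exact h k hk
    · have hkn : k = n + (k - n) := by omega
      rw [hkn, pow_add, hA, Matrix.mul_assoc]
      rw [Matrix.neg_mul, Matrix.sum_mul, Matrix.vecMul_neg]
      have : ∀ i ∈ Finset.range n,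
          v ᵥ* ((A.charpoly.coeff i • A ^ i) * (A ^ (k - n) * B)) = 0 := by
        intro i hi
        rw [Matrix.smul_mul, vecMul_csmul, ← Matrix.mul_assoc, ← pow_add]
        rw [ih (i + (k - n)) (by simp at hi; omega)]
        simp
      have hsum : v ᵥ* (∑ i ∈ Finset.range n,
          (A.charpoly.coeff i • A ^ i) * (A ^ (k - n) * B)) = 0 := by
        rw [vecMul_finset_sum]
        exact Finset.sum_eq_zero this
      rw [hsum, neg_zero]

theorem controllable_iff_hautus_rank
    {n m : ℕ} (A : Matrix (Fin n) (Fin n) ℂ) (B : Matrix (Fin n) (Fin m) ℂ) :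
    (ctrbMatrix A B).rank = n ↔
      ∀ z : ℂ, (Matrix.fromCols (z • (1 : Matrix (Fin n) (Fin n) ℂ) - A) B).rank = n := by
  rw [rank_eq_card_rows_iff']
  constructor
  · intro h z
    rw [rank_eq_card_rows_iff']
    intro v hv
    rw [Matrix.vecMul_fromCols] at hv
    have h1 : v ᵥ* (z • (1 : Matrix (Fin n) (Fin n) ℂ) - A) = 0 :=
      funext fun j => congr_fun hv (Sum.inl j)
    have h2 : v ᵥ* B = 0 := funext fun j => congr_fun hv (Sum.inr j)
    have hvA : v ᵥ* A = z • v := by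
      rw [Matrix.vecMul_sub, sub_eq_zero, vecMul_csmul, Matrix.vecMul_one] at h1
      exact h1.symm
    have hk : ∀ k : ℕ, v ᵥ* (A ^ k * B) = 0 := by
      intro k
      induction k with
      | zero => simpa using h2
      | succ k ih =>
        rw [pow_succ', Matrix.mul_assoc, ← Matrix.vecMul_vecMul, hvA,
          Matrix.smul_vecMul, ih, smul_zero]
    apply h
    ext kj
    have : (v ᵥ* ctrbMatrix A B) kj = (v ᵥ* (A ^ (kj.1 : ℕ) * B)) kj.2 := rfl
    rw [this, hk]
    rfl
  · intro h
    intro v hv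
    by_contra hv0
    have hfin : ∀ k < n, v ᵥ* (A ^ k * B) = 0 := by
      intro k hk
      ext j
      exact congr_fun hv (⟨k, hk⟩, j)
    have hall := vecMul_pow_ext A B v hfin
    let W : Submodule ℂ (Fin n → ℂ) :=
      { carrier := {w | ∀ k : ℕ, w ᵥ* (A ^ k * B) = 0}
        add_mem' := fun ha hb k => by rw [Matrix.add_vecMul, ha, hb, add_zero]
        zero_mem' := fun k => Matrix.zero_vecMul _
        smul_mem' := fun c a ha k => by rw [Matrix.smul_vecMul, ha, smul_zero] }
    have hvW : v ∈ W := hall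
    haveI : Nontrivial W := ⟨⟨⟨v, hvW⟩, 0, fun hc => hv0 (by simpa using congr_arg Subtype.val hc)⟩⟩
    have hAW : ∀ w ∈ W, (w ᵥ* A) ∈ W := by
      intro w hw k
      rw [Matrix.vecMul_vecMul, ← Matrix.mul_assoc, ← pow_succ']
      exact hw (k + 1)
    let f : Module.End ℂ W :=
      { toFun := fun w => ⟨w.1 ᵥ* A, hAW w.1 w.2⟩
        map_add' := fun a b => Subtype.ext (by simpa using Matrix.add_vecMul A a.1 b.1)
        map_smul' := fun c a => Subtype.ext (by simpa using Matrix.smul_vecMul c a.1 A) }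
    obtain ⟨μ, hμ⟩ := Module.End.exists_eigenvalue f
    obtain ⟨w, hw⟩ := hμ.exists_hasEigenvector
    have hwe : w.1 ᵥ* A = μ • w.1 := by
      have := Module.End.mem_eigenspace_iff.mp hw.1
      exact congr_arg Subtype.val this
    have hwB : w.1 ᵥ* B = 0 := by simpa using w.2 0
    have hz := (rank_eq_card_rows_iff' _).mp (h μ) w.1
    have hw0 : w.1 ≠ 0 := fun hc => hw.2 (Subtype.ext hc)
    apply hw0
    apply hz
    rw [Matrix.vecMul_fromCols, hwB]
    rw [Matrix.vecMul_sub, vecMul_csmul, Matrix.vecMul_one, hwe, sub_self]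
    ext (j | j) <;> rfl
end

section
/- Let A ∈ ℂ^{n×n} and C ∈ ℂ^{p×n}. The observability matrix with block rows C, CA, ..., CA^{n-1} has rank n if and only if the (n+p)×n matrix formed by stacking C on top of zI − A has rank n for every complex scalar z. -/
open Matrix

/-- The observability matrix with block rows `C, CA, ..., CA^(n-1)`. -/
noncomputable def obsvMatrix {n p : ℕ} (A : Matrix (Fin n) (Fin n) ℂ)
    (C : Matrix (Fin p) (Fin n) ℂ) : Matrix (Fin n × Fin p) (Fin n) ℂ :=
  Matrix.of fun ki j => (C * A ^ (ki.1 : ℕ)) ki.2 j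

lemma sum_mulVec' {ι m' n' : Type*} [Fintype n'] (s : Finset ι)
    (M : ι → Matrix m' n' ℂ) (x : n' → ℂ) :
    (∑ i ∈ s, M i) *ᵥ x = ∑ i ∈ s, M i *ᵥ x := by
  induction s using Finset.cons_induction with
  | empty => simp [Matrix.zero_mulVec]
  | cons a s ha ih => rw [Finset.sum_cons, Finset.sum_cons, Matrix.add_mulVec, ih]

lemma rank_eq_iff_ker {m : Type*} [Fintype m] {n : ℕ} (M : Matrix m (Fin n) ℂ) :
    M.rank = n ↔ LinearMap.ker M.mulVecLin = ⊥ := by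
  have h := LinearMap.finrank_range_add_finrank_ker M.mulVecLin
  rw [Matrix.rank]
  constructor
  · intro hr
    rw [hr] at h
    have : Module.finrank ℂ (Fin n → ℂ) = n := by simp
    rw [this] at h
    have hk : Module.finrank ℂ (LinearMap.ker M.mulVecLin) = 0 := by omega
    exact Submodule.finrank_eq_zero.mp hk
  · intro hk
    rw [hk] at h
    simp at h
    omega

/-- Key fact from Cayley–Hamilton: if `C * A^k *ᵥ x = 0` for all `k < n`,
then it holds for all `k`. -/
lemma pow_obsv_zero {n p : ℕ} (A : Matrix (Fin n) (Fin n) ℂ)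
    (C : Matrix (Fin p) (Fin n) ℂ) (x : Fin n → ℂ)
    (h : ∀ k < n, (C * A ^ k) *ᵥ x = 0) : ∀ k, (C * A ^ k) *ᵥ x = 0 := by
  -- A^n is a linear combination of A^0, ..., A^(n-1)
  have hCH : A ^ n = ∑ i ∈ Finset.range n, (-(A.charpoly.coeff i)) • A ^ i := by
    have h0 := Matrix.aeval_self_charpoly A
    have hmon := A.charpoly_monic
    have hdeg : A.charpoly.natDegree = n := by
      simp [A.charpoly_natDegree_eq_dim]
    have hsum : (Polynomial.aeval A) A.charpoly
        = ∑ i ∈ Finset.range (n + 1), A.charpoly.coeff i • A ^ i :=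
      Polynomial.aeval_eq_sum_range' (n := n + 1) (by omega) A
    rw [hsum, Finset.sum_range_succ] at h0
    have hlead : A.charpoly.coeff n = 1 := by
      simpa only [hdeg] using hmon.coeff_natDegree
    rw [hlead, one_smul] at h0
    have := eq_neg_of_add_eq_zero_right h0
    rw [this, ← Finset.sum_neg_distrib]
    exact Finset.sum_congr rfl (fun i _ => (neg_smul _ _).symm)
  intro k
  induction k using Nat.strong_induction_on with
  | _ k ih =>
    by_cases hk : k < n
    · exact h k hk
    · have hkn : k = n + (k - n) := by omega
      have hCAk : C * A ^ k
          = ∑ i ∈ Finset.range n, (-A.charpoly.coeff i) • (C * A ^ (i + (k - n))) := by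
        conv_lhs => rw [hkn, pow_add, hCH]
        rw [Matrix.sum_mul, Matrix.mul_sum]
        refine Finset.sum_congr rfl fun i _ => ?_
        rw [smul_mul_assoc, Matrix.mul_smul, pow_add]
      rw [hCAk, sum_mulVec']
      refine Finset.sum_eq_zero fun i hi => ?_
      rw [Matrix.smul_mulVec, ih (i + (k - n)) (by simp at hi; omega), smul_zero]

theorem observable_iff_hautus_rank
    {n p : ℕ} (A : Matrix (Fin n) (Fin n) ℂ) (C : Matrix (Fin p) (Fin n) ℂ) :
    (obsvMatrix A C).rank = n ↔
      ∀ z : ℂ, (Matrix.fromRows C (z • (1 : Matrix (Fin n) (Fin n) ℂ) - A)).rank = n := by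
  have hobs : ∀ (x : Fin n → ℂ), (obsvMatrix A C) *ᵥ x = 0 ↔
      ∀ k : Fin n, (C * A ^ (k : ℕ)) *ᵥ x = 0 := by
    intro x
    constructor
    · intro hx k
      funext i
      have := congrFun hx (k, i)
      simpa [obsvMatrix, Matrix.mulVec, dotProduct] using this
    · intro hx
      funext ki
      have := congrFun (hx ki.1) ki.2
      simpa [obsvMatrix, Matrix.mulVec, dotProduct] using this
  rw [rank_eq_iff_ker]
  constructor
  · -- observable → Hautus
    intro hker z
    rw [rank_eq_iff_ker, LinearMap.ker_eq_bot']
    intro x hx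
    rw [Matrix.mulVecLin_apply, Matrix.fromRows_mulVec] at hx
    have hC : C *ᵥ x = 0 := by
      funext i; exact congrFun hx (Sum.inl i)
    have hA : A *ᵥ x = z • x := by
      have h2 : (z • (1 : Matrix (Fin n) (Fin n) ℂ) - A) *ᵥ x = 0 := by
        funext i; exact congrFun hx (Sum.inr i)
      rw [Matrix.sub_mulVec, sub_eq_zero] at h2
      rw [← h2, Matrix.smul_mulVec, Matrix.one_mulVec]
    have hpow : ∀ k : ℕ, A ^ k *ᵥ x = z ^ k • x := by
      intro k
      induction k with
      | zero => simp [Matrix.one_mulVec]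
      | succ k ih =>
        rw [pow_succ, pow_succ, ← Matrix.mulVec_mulVec, hA,
          Matrix.mulVec_smul, ih, smul_smul, mul_comm]
    have : (obsvMatrix A C) *ᵥ x = 0 := by
      rw [hobs]
      intro k
      rw [← Matrix.mulVec_mulVec, hpow, Matrix.mulVec_smul, hC, smul_zero]
    have : x ∈ LinearMap.ker (obsvMatrix A C).mulVecLin := this
    rw [hker] at this
    exact this
  · -- Hautus → observable
    intro hH
    by_contra hker
    obtain ⟨x, hxmem, hx0⟩ := Submodule.exists_mem_ne_zero_of_ne_bot hker
    have hxk : ∀ k, (C * A ^ k) *ᵥ x = 0 := by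
      apply pow_obsv_zero
      intro k hk
      exact (hobs x).mp hxmem ⟨k, hk⟩
    -- the A-invariant subspace of unobservable states
    set V : Submodule ℂ (Fin n → ℂ) :=
      ⨅ k : ℕ, LinearMap.ker (C * A ^ k).mulVecLin with hV
    have hmemV : ∀ y, y ∈ V ↔ ∀ k, (C * A ^ k) *ᵥ y = 0 := by
      intro y
      simp [hV, Submodule.mem_iInf, LinearMap.mem_ker]
    have hxV : x ∈ V := (hmemV x).mpr hxk
    have hVnt : Nontrivial V := by
      refine Submodule.nontrivial_iff_ne_bot.mpr ?_
      intro hbot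
      rw [hbot] at hxV
      exact hx0 hxV
    have hinv : ∀ y ∈ V, A.mulVecLin y ∈ V := by
      intro y hy
      rw [hmemV] at hy ⊢
      intro k
      have := hy (k + 1)
      rw [pow_succ, ← Matrix.mul_assoc] at this
      rw [Matrix.mulVecLin_apply, Matrix.mulVec_mulVec]
      exact this
    let f : V →ₗ[ℂ] V := A.mulVecLin.restrict hinv
    obtain ⟨z, hz⟩ := Module.End.exists_eigenvalue f
    obtain ⟨⟨v, hvV⟩, hv⟩ := hz.exists_hasEigenvector
    have hveq : A *ᵥ v = z • v := by
      have := hv.apply_eq_smul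
      have h2 := congrArg Subtype.val this
      simpa [f, LinearMap.restrict_apply] using h2
    have hvne : v ≠ 0 := by
      intro h
      exact hv.right (Subtype.ext h)
    have hHz := hH z
    rw [rank_eq_iff_ker] at hHz
    have hvker : v ∈ LinearMap.ker (Matrix.fromRows C
        (z • (1 : Matrix (Fin n) (Fin n) ℂ) - A)).mulVecLin := by
      rw [LinearMap.mem_ker, Matrix.mulVecLin_apply, Matrix.fromRows_mulVec]
      have hCv : C *ᵥ v = 0 := by
        have := (hmemV v).mp hvV 0
        simpa using this
      have hAv : (z • (1 : Matrix (Fin n) (Fin n) ℂ) - A) *ᵥ v = 0 := by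
        rw [Matrix.sub_mulVec, Matrix.smul_mulVec, Matrix.one_mulVec, hveq,
          sub_self]
      rw [hCv, hAv]
      funext i
      cases i <;> rfl
    rw [hHz] at hvker
    exact hvne hvker
end

section
/- Let A ∈ ℂ^{n×n}, B ∈ ℂ^{n×m}, and suppose the controllability matrix [B, AB, ..., A^{n-1}B] has rank q with 0 < q < n. Then there exists an invertible matrix P ∈ ℂ^{n×n} such that P⁻¹AP is block upper triangular of the form [[Â₁₁, Â₁₂],[0, Â₂₂]] with Â₁₁ of size q×q, and P⁻¹B = [[B̂₁₁],[0]] with B̂₁₁ of size q×m, and moreover the q×(qm) matrix [B̂₁₁, Â₁₁B̂₁₁, ..., Â₁₁^{q-1}B̂₁₁] has rank q. -/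
open Matrix

/-- Cayley–Hamilton: all powers applied to `b` stay in a submodule containing the
first `s` powers applied to `b`. -/
private lemma pow_mulVec_mem {s : ℕ} (hs : 0 < s) (M : Matrix (Fin s) (Fin s) ℂ)
    (b : Fin s → ℂ) (S : Submodule ℂ (Fin s → ℂ))
    (hS : ∀ i, i < s → (M ^ i) *ᵥ b ∈ S) : ∀ k, (M ^ k) *ᵥ b ∈ S := by
  have hdeg : M.charpoly.natDegree = s := by
    simpa using M.charpoly_natDegree_eq_dim
  have hCH : M ^ s = -∑ i ∈ Finset.range s, M.charpoly.coeff i • M ^ i := by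
    have h0 := M.aeval_self_charpoly
    rw [Polynomial.aeval_eq_sum_range, hdeg, Finset.sum_range_succ] at h0
    have hc : M.charpoly.coeff s = 1 := by
      have h1 := M.charpoly_monic
      rwa [Polynomial.Monic, Polynomial.leadingCoeff, hdeg] at h1
    rw [hc, one_smul] at h0
    exact eq_neg_of_add_eq_zero_right h0
  intro k
  induction k using Nat.strong_induction_on with
  | _ k ih =>
    rcases lt_or_ge k s with hk | hk
    · exact hS k hk
    · have h1 : M ^ k = M ^ (k - s) * M ^ s := by
        rw [← pow_add]; congr 1; omega
      have hMk : M ^ k = -∑ i ∈ Finset.range s,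
          M.charpoly.coeff i • M ^ (k - s + i) := by
        rw [h1, hCH, Matrix.mul_neg, Finset.mul_sum]
        congr 1
        refine Finset.sum_congr rfl fun i hi => ?_
        rw [Matrix.mul_smul, ← pow_add]
      have hvec : M ^ k *ᵥ b = -∑ i ∈ Finset.range s,
          M.charpoly.coeff i • ((M ^ (k - s + i)) *ᵥ b) := by
        rw [hMk, Matrix.neg_mulVec]
        congr 1
        have hsum := map_sum (AddMonoidHom.mk' (fun N : Matrix (Fin s) (Fin s) ℂ => N *ᵥ b)
          (fun N N' => Matrix.add_mulVec N N' b))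
          (fun i => M.charpoly.coeff i • M ^ (k - s + i)) (Finset.range s)
        simp only [AddMonoidHom.mk'_apply] at hsum
        rw [hsum]
        refine Finset.sum_congr rfl fun i hi => ?_
        rw [Matrix.smul_mulVec]
      rw [hvec]
      refine S.neg_mem (Submodule.sum_mem _ fun i hi => S.smul_mem _ ?_)
      exact ih _ (by simp at hi; omega)

private lemma sum_fin_eq_sum_castLE {n q : ℕ} (h : q ≤ n) (f : Fin n → ℂ)
    (hf : ∀ l : Fin n, q ≤ (l : ℕ) → f l = 0) :
    ∑ l, f l = ∑ l : Fin q, f (Fin.castLE h l) := by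
  have hnq : q + (n - q) = n := by omega
  let σ : (Fin q ⊕ Fin (n - q)) ≃ Fin n := finSumFinEquiv.trans (finCongr hnq)
  have h1 : ∀ l : Fin q, σ (Sum.inl l) = Fin.castLE h l := by
    intro l
    ext
    simp [σ]
  have h2 : ∀ r : Fin (n - q), f (σ (Sum.inr r)) = 0 := by
    intro r
    apply hf
    have hv : ((σ (Sum.inr r)) : ℕ) = q + (r : ℕ) := by simp [σ]
    omega
  calc ∑ l, f l = ∑ x, f (σ x) := (Equiv.sum_comp σ f).symm
    _ = (∑ l : Fin q, f (σ (Sum.inl l))) + ∑ r : Fin (n - q), f (σ (Sum.inr r)) :=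
        Fintype.sum_sum_type _
    _ = ∑ l : Fin q, f (Fin.castLE h l) := by
        rw [Finset.sum_eq_zero (fun r _ => h2 r), add_zero]
        exact Finset.sum_congr rfl fun l _ => by rw [h1]

theorem controllable_decomposition
    {n m q : ℕ} (A : Matrix (Fin n) (Fin n) ℂ) (B : Matrix (Fin n) (Fin m) ℂ)
    (hq : 0 < q) (hqn : q < n) (hrank : (ctrbMatrix A B).rank = q) :
    ∃ P : Matrix (Fin n) (Fin n) ℂ, IsUnit P ∧
      (∀ i j : Fin n, q ≤ (i : ℕ) → (j : ℕ) < q → (P⁻¹ * A * P) i j = 0) ∧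
      (∀ (i : Fin n) (j : Fin m), q ≤ (i : ℕ) → (P⁻¹ * B) i j = 0) ∧
      (ctrbMatrix ((P⁻¹ * A * P).submatrix (Fin.castLE hqn.le) (Fin.castLE hqn.le))
        ((P⁻¹ * B).submatrix (Fin.castLE hqn.le) id)).rank = q := by
  classical
  have hn : 0 < n := hq.trans hqn
  set C := ctrbMatrix A B with hCdef
  set V : Submodule ℂ (Fin n → ℂ) := LinearMap.range C.mulVecLin with hVdef
  have hVrank : Module.finrank ℂ V = q := hrank
  have hVspan : V = Submodule.span ℂ (Set.range Cᵀ) := Matrix.range_mulVecLin C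
  have hcolC : ∀ (k : Fin n) (j : Fin m),
      (A ^ (k : ℕ)) *ᵥ (fun i => B i j) = Cᵀ (k, j) := by
    intro k j
    funext i
    simp [hCdef, ctrbMatrix, Matrix.mul_apply, Matrix.mulVec, dotProduct]
  have hcol : ∀ (k : Fin n) (j : Fin m), (A ^ (k : ℕ)) *ᵥ (fun i => B i j) ∈ V := by
    intro k j
    rw [hcolC, hVspan]
    exact Submodule.subset_span ⟨(k, j), rfl⟩
  have hpow : ∀ (kk : ℕ) (j : Fin m), (A ^ kk) *ᵥ (fun i => B i j) ∈ V :=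
    fun kk j => pow_mulVec_mem hn A _ V (fun i hi => hcol ⟨i, hi⟩ j) kk
  have hBcol : ∀ j, (fun i => B i j) ∈ V := by
    intro j
    simpa using hpow 0 j
  have hAinv : ∀ v ∈ V, A *ᵥ v ∈ V := by
    intro v hv
    rw [hVspan] at hv
    induction hv using Submodule.span_induction with
    | mem x hx =>
      obtain ⟨⟨k, j⟩, rfl⟩ := hx
      rw [← hcolC]
      have : A *ᵥ ((A ^ (k : ℕ)) *ᵥ (fun i => B i j)) =
          (A ^ ((k : ℕ) + 1)) *ᵥ (fun i => B i j) := by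
        rw [Matrix.mulVec_mulVec, pow_succ']
      rw [this]
      exact hpow _ j
    | zero => simpa using V.zero_mem
    | add x y hx hy ihx ihy => rw [Matrix.mulVec_add]; exact V.add_mem ihx ihy
    | smul c x hx ihx => rw [Matrix.mulVec_smul]; exact V.smul_mem c ihx
  -- basis adapted to V
  obtain ⟨W, hW⟩ := Submodule.exists_isCompl V
  have hdim : Module.finrank ℂ (Fin n → ℂ) = n := Module.finrank_fin_fun ℂ
  have hWrank : Module.finrank ℂ W = n - q := by
    have h := Submodule.finrank_add_eq_of_isCompl hW
    rw [hVrank, hdim] at h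
    omega
  let bV : Module.Basis (Fin q) ℂ V := (Module.finBasis ℂ V).reindex (finCongr hVrank)
  let bW : Module.Basis (Fin (n - q)) ℂ W := (Module.finBasis ℂ W).reindex (finCongr hWrank)
  let eVW := Submodule.prodEquivOfIsCompl V W hW
  let σ : (Fin q ⊕ Fin (n - q)) ≃ Fin n := finSumFinEquiv.trans (finCongr (by omega))
  let b : Module.Basis (Fin n) ℂ (Fin n → ℂ) := ((bV.prod bW).map eVW).reindex σ
  have hbmem : ∀ i : Fin n, (i : ℕ) < q → b i ∈ V := by
    intro i hi
    have hσs : σ.symm i = Sum.inl ⟨(i : ℕ), hi⟩ := by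
      rw [Equiv.symm_apply_eq]
      ext
      simp [σ]
    have hb : b i = eVW ((bV.prod bW) (Sum.inl ⟨(i : ℕ), hi⟩)) := by
      rw [show b i = ((bV.prod bW).map eVW) (σ.symm i) from
        Module.Basis.reindex_apply _ _ i, hσs, Module.Basis.map_apply]
    rw [hb]
    have hprod : (bV.prod bW) (Sum.inl ⟨(i : ℕ), hi⟩) =
        (bV ⟨(i : ℕ), hi⟩, 0) := by
      ext <;> simp [Module.Basis.prod_apply]
    rw [hprod]
    have : eVW (bV ⟨(i : ℕ), hi⟩, 0) = ↑(bV ⟨(i : ℕ), hi⟩) := by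
      simp [eVW, Submodule.coe_prodEquivOfIsCompl]
    rw [this]
    exact (bV ⟨(i : ℕ), hi⟩).2
  have hbrepr : ∀ v ∈ V, ∀ i : Fin n, q ≤ (i : ℕ) → b.repr v i = 0 := by
    intro v hv i hi
    have hiq : (i : ℕ) - q < n - q := by omega
    have hσs : σ.symm i = Sum.inr ⟨(i : ℕ) - q, hiq⟩ := by
      rw [Equiv.symm_apply_eq]
      ext
      simp [σ]
      omega
    have h1 : b.repr v i = ((bV.prod bW).map eVW).repr v (Sum.inr ⟨(i : ℕ) - q, hiq⟩) := by
      rw [Module.Basis.repr_reindex, Finsupp.mapDomain_equiv_apply, hσs]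
    rw [h1, Module.Basis.map_repr]
    simp only [LinearEquiv.trans_apply]
    have h2 : eVW.symm v = (⟨v, hv⟩, 0) :=
      Submodule.prodEquivOfIsCompl_symm_apply_left V W hW ⟨v, hv⟩
    rw [h2, Module.Basis.prod_repr_inr]
    simp
  -- change of basis matrices
  let e0 := Pi.basisFun ℂ (Fin n)
  let P := e0.toMatrix b
  let Q := b.toMatrix ⇑e0
  have hQP : Q * P = 1 := b.toMatrix_mul_toMatrix_flip e0
  have hPQ : P * Q = 1 := e0.toMatrix_mul_toMatrix_flip b
  have hPunit : IsUnit P := ⟨⟨P, Q, hPQ, hQP⟩, rfl⟩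
  have hPinv : P⁻¹ = Q := Matrix.inv_eq_left_inv hQP
  have hPcol : ∀ j i, P i j = b j i := by
    intro j i
    simp [P, e0, Module.Basis.toMatrix_apply, Pi.basisFun_repr]
  have hQrepr : ∀ (v : Fin n → ℂ) (i : Fin n), (Q *ᵥ v) i = b.repr v i := by
    intro v i
    have hv : ∑ j, v j • e0 j = v := by
      have := e0.sum_repr v
      simpa [e0, Pi.basisFun_repr] using this
    calc (Q *ᵥ v) i = ∑ j, b.repr (e0 j) i * v j := by
          simp [Q, Matrix.mulVec, dotProduct, Module.Basis.toMatrix_apply]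
      _ = b.repr v i := by
          conv_rhs => rw [← hv]
          rw [map_sum, Finsupp.finset_sum_apply]
          refine Finset.sum_congr rfl fun j _ => ?_
          rw [_root_.map_smul]
          simp [mul_comm]
  have hQmul : ∀ {κ : Type} [Fintype κ] (M : Matrix (Fin n) κ ℂ) (i : Fin n) (j : κ),
      (Q * M) i j = b.repr (fun l => M l j) i := by
    intro κ _ M i j
    rw [← hQrepr]
    simp [Matrix.mul_apply, Matrix.mulVec, dotProduct]
  refine ⟨P, hPunit, ?_, ?_, ?_⟩
  · -- lower-left block of P⁻¹ A P is zero
    intro i j hi hj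
    rw [hPinv, Matrix.mul_assoc]
    have hAPcol : (fun l => (A * P) l j) = A *ᵥ b j := by
      funext l
      simp [Matrix.mul_apply, Matrix.mulVec, dotProduct, hPcol]
    rw [hQmul, hAPcol]
    exact hbrepr _ (hAinv _ (hbmem j hj)) i hi
  · intro i j hi
    rw [hPinv, hQmul]
    exact hbrepr _ (hBcol j) i hi
  · rw [hPinv]
    set Ah := Q * A * P with hAh
    set Bh := Q * B with hBh
    have hAhpow : ∀ k : ℕ, Ah ^ k = Q * A ^ k * P := by
      intro k
      induction k with
      | zero => simp [hQP]
      | succ k ih =>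
        have h1 : P * (Q * A * P) = A * P := by
          rw [hAh] at *
          rw [Matrix.mul_assoc Q A P, ← Matrix.mul_assoc P Q (A * P), hPQ, Matrix.one_mul]
        calc Ah ^ (k + 1) = (Q * A ^ k * P) * (Q * A * P) := by rw [pow_succ, ih, hAh]
          _ = (Q * A ^ k) * (P * (Q * A * P)) := by
              rw [Matrix.mul_assoc (Q * A ^ k) P _]
          _ = (Q * A ^ k) * (A * P) := by rw [h1]
          _ = Q * A ^ (k + 1) * P := by
              rw [pow_succ, Matrix.mul_assoc, Matrix.mul_assoc, Matrix.mul_assoc]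
    have hAhB : ∀ k : ℕ, Ah ^ k * Bh = Q * (A ^ k * B) := by
      intro k
      rw [hAhpow, hBh, Matrix.mul_assoc (Q * A ^ k) P (Q * B),
        ← Matrix.mul_assoc P Q B, hPQ, Matrix.one_mul, Matrix.mul_assoc]
    have hcolAB : ∀ (k : ℕ) (j : Fin m),
        (fun l => (A ^ k * B) l j) = (A ^ k) *ᵥ (fun i => B i j) := by
      intro k j
      funext l
      simp [Matrix.mul_apply, Matrix.mulVec, dotProduct]
    have hbot : ∀ (k : ℕ) (i : Fin n) (j : Fin m), q ≤ (i : ℕ) →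
        (Ah ^ k * Bh) i j = 0 := by
      intro k i j hi
      rw [hAhB, hQmul, hcolAB]
      exact hbrepr _ (hpow k j) i hi
    set A1 := Ah.submatrix (Fin.castLE hqn.le) (Fin.castLE hqn.le) with hA1
    set B1 := Bh.submatrix (Fin.castLE hqn.le) id with hB1
    have htop : ∀ (k : ℕ) (i : Fin q) (j : Fin m),
        (Ah ^ k * Bh) (Fin.castLE hqn.le i) j = (A1 ^ k * B1) i j := by
      intro k
      induction k with
      | zero =>
        intro i j
        simp [hB1]
      | succ k ih =>
        intro i j
        rw [pow_succ' Ah k, Matrix.mul_assoc Ah (Ah ^ k) Bh, pow_succ' A1 k,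
          Matrix.mul_assoc A1 (A1 ^ k) B1]
        have h1 : (Ah * (Ah ^ k * Bh)) (Fin.castLE hqn.le i) j =
            ∑ l, Ah (Fin.castLE hqn.le i) l * (Ah ^ k * Bh) l j := by
          simp [Matrix.mul_apply]
        rw [h1, sum_fin_eq_sum_castLE hqn.le _
          (fun l hl => by rw [hbot k l j hl, mul_zero])]
        have h2 : (A1 * (A1 ^ k * B1)) i j = ∑ l, A1 i l * (A1 ^ k * B1) l j := by
          simp [Matrix.mul_apply]
        rw [h2]
        refine Finset.sum_congr rfl fun l _ => ?_
        rw [ih l j]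
        rfl
    -- big controllability matrix
    set bigM := ctrbMatrix Ah Bh with hbigM
    have hbigMC : bigM = Q * C := by
      funext i kj
      rw [hbigM]
      show (Ah ^ (kj.1 : ℕ) * Bh) i kj.2 = (Q * C) i kj
      rw [hAhB]
      simp [Matrix.mul_apply, hCdef, ctrbMatrix, Finset.mul_sum, Finset.sum_mul,
        mul_assoc]
    have hQunit : IsUnit Q := ⟨⟨Q, P, hQP, hPQ⟩, rfl⟩
    have hbigMrank : bigM.rank = q := by
      rw [hbigMC, Matrix.rank_mul_eq_right_of_isUnit_det Q C
        ((Matrix.isUnit_iff_isUnit_det Q).mp hQunit)]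
      exact hrank
    set M1 := bigM.submatrix (Fin.castLE hqn.le) id with hM1
    let E : Matrix (Fin n) (Fin q) ℂ :=
      Matrix.of fun i j => if (i : ℕ) = (j : ℕ) then 1 else 0
    have hEM : bigM = E * M1 := by
      funext i kj
      have h1 : (E * M1) i kj = ∑ j : Fin q,
          (if (i : ℕ) = (j : ℕ) then (1:ℂ) else 0) * bigM (Fin.castLE hqn.le j) kj := by
        simp [Matrix.mul_apply, hM1, E]
      rw [h1]
      rcases lt_or_ge (i : ℕ) q with hi | hi
      · rw [Finset.sum_eq_single ⟨(i : ℕ), hi⟩]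
        · have : Fin.castLE hqn.le ⟨(i : ℕ), hi⟩ = i := by ext; rfl
          rw [this]
          simp
        · intro j _ hj
          have hne : (i : ℕ) ≠ (j : ℕ) := fun h => hj (Fin.ext h.symm)
          simp [hne]
        · simp
      · have hz : bigM i kj = 0 := by
          rw [hbigM]
          exact hbot _ i kj.2 hi
        rw [hz]
        refine (Finset.sum_eq_zero fun j _ => ?_).symm
        have hj2 := j.isLt
        have hne : (i : ℕ) ≠ (j : ℕ) := by omega
        simp [hne]
    have hM1rank : M1.rank = q := by
      refine le_antisymm ?_ ?_
      · simpa using M1.rank_le_card_height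
      · calc q = bigM.rank := hbigMrank.symm
          _ = (E * M1).rank := by rw [hEM]
          _ ≤ M1.rank := Matrix.rank_mul_le_right E M1
    -- columns of M1 are A1^k *ᵥ (col of B1)
    have hM1col : ∀ (k : Fin n) (j : Fin m),
        M1ᵀ (k, j) = (A1 ^ (k : ℕ)) *ᵥ (fun i => B1 i j) := by
      intro k j
      funext i
      have h1 : M1ᵀ (k, j) i = (Ah ^ (k : ℕ) * Bh) (Fin.castLE hqn.le i) j := rfl
      rw [h1, htop]
      simp [Matrix.mul_apply, Matrix.mulVec, dotProduct]
    set C1 := ctrbMatrix A1 B1 with hC1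
    have hC1col : ∀ (k : Fin q) (j : Fin m),
        C1ᵀ (k, j) = (A1 ^ (k : ℕ)) *ᵥ (fun i => B1 i j) := by
      intro k j
      funext i
      simp [hC1, ctrbMatrix, Matrix.mul_apply, Matrix.mulVec, dotProduct]
    set S := LinearMap.range C1.mulVecLin with hS
    have hSspan : S = Submodule.span ℂ (Set.range C1ᵀ) := Matrix.range_mulVecLin C1
    have hSmem : ∀ (k : ℕ) (j : Fin m), (A1 ^ k) *ᵥ (fun i => B1 i j) ∈ S := by
      intro k j
      refine pow_mulVec_mem hq A1 _ S (fun i hi => ?_) k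
      rw [hSspan, ← hC1col ⟨i, hi⟩ j]
      exact Submodule.subset_span ⟨(⟨i, hi⟩, j), rfl⟩
    have hle : LinearMap.range M1.mulVecLin ≤ S := by
      rw [Matrix.range_mulVecLin, Submodule.span_le]
      rintro x ⟨⟨k, j⟩, rfl⟩
      rw [show M1.col (k, j) = M1ᵀ (k, j) from rfl, hM1col]
      exact hSmem _ j
    refine le_antisymm ?_ ?_
    · simpa using C1.rank_le_card_height
    · calc q = M1.rank := hM1rank.symm
        _ ≤ C1.rank := Submodule.finrank_mono hle
end

section
/- Let A ∈ ℝ^{n×n} and C ∈ ℝ^{p×n}. If there exists a nonzero x ∈ ℝ^n with C A^k x = 0 for k = 0, 1, ..., n−1, then the observability Gramian ∫_{t₀}^{t_f} exp(tA)ᵀ Cᵀ C exp(tA) dt is singular for all t₀ < t_f. -/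
open Matrix intervalIntegral

lemma sum_mulVec_aux {n m : ℕ} (s : Finset ℕ) (f : ℕ → Matrix (Fin m) (Fin n) ℝ)
    (x : Fin n → ℝ) : (∑ i ∈ s, f i) *ᵥ x = ∑ i ∈ s, f i *ᵥ x := by
  ext j
  simp [Matrix.mulVec, dotProduct, Finset.sum_apply, Matrix.sum_apply, Finset.sum_mul]
  exact Finset.sum_comm

lemma pow_mulVec_mem_span {n : ℕ} (A : Matrix (Fin n) (Fin n) ℝ) (x : Fin n → ℝ) :
    ∀ k : ℕ, A ^ k *ᵥ x ∈
      Submodule.span ℝ (Set.range fun i : Fin n => A ^ (i : ℕ) *ᵥ x) := by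
  intro k
  induction k using Nat.strong_induction_on with
  | _ k ih =>
    by_cases hk : k < n
    · exact Submodule.subset_span ⟨⟨k, hk⟩, rfl⟩
    · push_neg at hk
      have hmonic := A.charpoly_monic
      have hdeg : A.charpoly.natDegree = n := by
        rcases Nat.eq_zero_or_pos n with h0 | h0
        · subst h0; simp [Matrix.charpoly]
        · simp [A.charpoly_natDegree_eq_dim]
      have hcn : A.charpoly.coeff n = 1 := by
        have h := hmonic.coeff_natDegree
        rwa [hdeg] at h
      have hCH := A.aeval_self_charpoly
      rw [Polynomial.aeval_eq_sum_range, hdeg, Finset.sum_range_succ, hcn, one_smul] at hCH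
      have hAn : A ^ n = -∑ i ∈ Finset.range n, A.charpoly.coeff i • A ^ i := by
        linear_combination (norm := abel) hCH
      have hAk : A ^ k = A ^ (k - n) * A ^ n := by
        rw [← pow_add, Nat.sub_add_cancel hk]
      have hmul : A ^ (k - n) * -∑ i ∈ Finset.range n, A.charpoly.coeff i • A ^ i
          = -∑ i ∈ Finset.range n, A.charpoly.coeff i • A ^ (k - n + i) := by
        rw [mul_neg, Finset.mul_sum]
        congr 1
        refine Finset.sum_congr rfl fun i _ => ?_
        rw [mul_smul_comm, ← pow_add]
      rw [hAk, hAn, hmul, Matrix.neg_mulVec]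
      refine neg_mem ?_
      have hsum : (∑ i ∈ Finset.range n, A.charpoly.coeff i • A ^ (k - n + i)) *ᵥ x
          = ∑ i ∈ Finset.range n, A.charpoly.coeff i • (A ^ (k - n + i) *ᵥ x) := by
        rw [sum_mulVec_aux]
        exact Finset.sum_congr rfl fun i _ => Matrix.smul_mulVec _ _ _
      rw [hsum]
      refine Submodule.sum_mem _ fun i hi => Submodule.smul_mem _ _ (ih _ ?_)
      have := Finset.mem_range.mp hi
      omega

lemma mulVec_pow_zero {n p : ℕ} (A : Matrix (Fin n) (Fin n) ℝ)
    (C : Matrix (Fin p) (Fin n) ℝ) (x : Fin n → ℝ)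
    (hCA : ∀ k < n, C *ᵥ (A ^ k *ᵥ x) = 0) :
    ∀ k : ℕ, C *ᵥ (A ^ k *ᵥ x) = 0 := by
  intro k
  have hmem := pow_mulVec_mem_span A x k
  have hle : Submodule.span ℝ (Set.range fun i : Fin n => A ^ (i : ℕ) *ᵥ x)
      ≤ LinearMap.ker C.mulVecLin := by
    rw [Submodule.span_le]
    rintro _ ⟨i, rfl⟩
    exact LinearMap.mem_ker.mpr (by simpa using hCA i i.isLt)
  simpa using hle hmem

set_option maxHeartbeats 1000000 in
lemma C_exp_mulVec_zero {n p : ℕ} (A : Matrix (Fin n) (Fin n) ℝ)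
    (C : Matrix (Fin p) (Fin n) ℝ) (x : Fin n → ℝ)
    (hall : ∀ k : ℕ, C *ᵥ (A ^ k *ᵥ x) = 0) (t : ℝ) :
    C *ᵥ (NormedSpace.exp (t • A) *ᵥ x) = 0 := by
  letI : SeminormedRing (Matrix (Fin n) (Fin n) ℝ) := Matrix.linftyOpSemiNormedRing
  letI : NormedRing (Matrix (Fin n) (Fin n) ℝ) := Matrix.linftyOpNormedRing
  letI : NormedAlgebra ℝ (Matrix (Fin n) (Fin n) ℝ) := Matrix.linftyOpNormedAlgebra
  let L : Matrix (Fin n) (Fin n) ℝ →ₗ[ℝ] (Fin p → ℝ) :=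
    { toFun := fun M => C *ᵥ (M *ᵥ x)
      map_add' := fun M N => by simp [Matrix.add_mulVec, Matrix.mulVec_add]
      map_smul' := fun c M => by simp [Matrix.smul_mulVec, Matrix.mulVec_smul] }
  let Lc : Matrix (Fin n) (Fin n) ℝ →L[ℝ] (Fin p → ℝ) := LinearMap.toContinuousLinearMap L
  have hLc : ∀ M, Lc M = C *ᵥ (M *ᵥ x) := fun M =>
    congrFun (LinearMap.coe_toContinuousLinearMap' L) M
  rw [← hLc, NormedSpace.exp_eq_tsum ℝ,
    Lc.map_tsum (NormedSpace.expSeries_summable' (t • A))]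
  have hterm : ∀ k : ℕ, Lc (((k.factorial : ℝ))⁻¹ • (t • A) ^ k) = 0 := by
    intro k
    rw [Lc.map_smul, hLc, smul_pow, Matrix.smul_mulVec, Matrix.mulVec_smul,
      hall k, smul_zero, smul_zero]
  simp only [hterm, tsum_zero]

set_option maxHeartbeats 1000000 in
lemma exp_smul_continuous {n : ℕ} (A : Matrix (Fin n) (Fin n) ℝ) :
    Continuous fun t : ℝ => NormedSpace.exp (t • A) := by
  letI : SeminormedRing (Matrix (Fin n) (Fin n) ℝ) := Matrix.linftyOpSemiNormedRing
  letI : NormedRing (Matrix (Fin n) (Fin n) ℝ) := Matrix.linftyOpNormedRing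
  letI : NormedAlgebra ℝ (Matrix (Fin n) (Fin n) ℝ) := Matrix.linftyOpNormedAlgebra
  letI : NormedAlgebra ℚ (Matrix (Fin n) (Fin n) ℝ) := .restrictScalars ℚ ℝ _
  exact NormedSpace.exp_continuous.comp (continuous_id.smul continuous_const)

theorem gramian_singular_of_unobservable_markov_parameters
    {n p : ℕ} (A : Matrix (Fin n) (Fin n) ℝ) (C : Matrix (Fin p) (Fin n) ℝ)
    (x : Fin n → ℝ) (hx : x ≠ 0) (hCA : ∀ k < n, C *ᵥ (A ^ k *ᵥ x) = 0) :
    ∀ t₀ t_f : ℝ, t₀ < t_f →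
      ¬ IsUnit (Matrix.of fun i j => ∫ t in t₀..t_f,
        ((NormedSpace.exp (t • A))ᵀ * Cᵀ * C * NormedSpace.exp (t • A)) i j :
          Matrix (Fin n) (Fin n) ℝ) := by
  intro t₀ t_f ht hW
  have hall := mulVec_pow_zero A C x hCA
  set g : ℝ → Matrix (Fin n) (Fin n) ℝ :=
    fun t => (NormedSpace.exp (t • A))ᵀ * Cᵀ * C * NormedSpace.exp (t • A) with hg
  set W : Matrix (Fin n) (Fin n) ℝ := Matrix.of fun i j => ∫ t in t₀..t_f, g t i j with hWdef
  -- g t *ᵥ x = 0 for all t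
  have hgx : ∀ t, g t *ᵥ x = 0 := by
    intro t
    rw [hg]
    rw [← Matrix.mulVec_mulVec, ← Matrix.mulVec_mulVec, ← Matrix.mulVec_mulVec,
      C_exp_mulVec_zero A C x hall t, Matrix.mulVec_zero, Matrix.mulVec_zero]
  -- continuity of entries
  have hgc : Continuous g := by
    have he := exp_smul_continuous A
    exact ((he.matrix_transpose.matrix_mul continuous_const).matrix_mul
      continuous_const).matrix_mul he
  -- W *ᵥ x = 0
  have hWx : W *ᵥ x = 0 := by
    ext i
    have h1 : (W *ᵥ x) i = ∑ j, (∫ t in t₀..t_f, g t i j) * x j := by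
      simp [hWdef, Matrix.mulVec, dotProduct]
    have h2 : ∀ j, (∫ t in t₀..t_f, g t i j) * x j = ∫ t in t₀..t_f, g t i j * x j := by
      intro j
      rw [intervalIntegral.integral_mul_const]
    have h3 : ∑ j, ∫ t in t₀..t_f, g t i j * x j
        = ∫ t in t₀..t_f, ∑ j, g t i j * x j := by
      rw [← intervalIntegral.integral_finset_sum]
      intro j _
      exact ((hgc.matrix_elem i j).mul continuous_const).intervalIntegrable _ _
    have h4 : ∀ t, ∑ j, g t i j * x j = 0 := by
      intro t
      have := congrFun (hgx t) i
      simpa [Matrix.mulVec, dotProduct] using this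
    simp only [h1, h2, h3]
    simp [h4]
  -- conclude
  obtain ⟨u, hu⟩ := hW
  apply hx
  calc x = (1 : Matrix (Fin n) (Fin n) ℝ) *ᵥ x := (Matrix.one_mulVec x).symm
    _ = ((↑u⁻¹ : Matrix (Fin n) (Fin n) ℝ) * ↑u) *ᵥ x := by rw [u.inv_mul]
    _ = (↑u⁻¹ : Matrix (Fin n) (Fin n) ℝ) *ᵥ (W *ᵥ x) := by
        rw [← Matrix.mulVec_mulVec, hu]
    _ = 0 := by rw [hWx, Matrix.mulVec_zero]
end

section
/- Let A ∈ ℝ^{n×n}, B ∈ ℝ^{n×m}, t₀ < t_f. If the controllability Gramian G_C = ∫_{t₀}^{t_f} exp((t₀−s)A) B Bᵀ exp((t₀−s)A)ᵀ ds is invertible, then for any x₀, x_f ∈ ℝ^n there exists a continuous input u : [t₀, t_f] → ℝ^m such that the solution of x' = Ax + Bu, x(t₀) = x₀ satisfies x(t_f) = x_f. -/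
open Matrix intervalIntegral

theorem gramian_invertible_implies_controllable
    {n m : ℕ} (A : Matrix (Fin n) (Fin n) ℝ) (B : Matrix (Fin n) (Fin m) ℝ)
    (t₀ t_f : ℝ) (ht : t₀ < t_f)
    (G : Matrix (Fin n) (Fin n) ℝ)
    (hG : G = Matrix.of fun i j => ∫ s in t₀..t_f,
      (NormedSpace.exp ((t₀ - s) • A) * B * Bᵀ * (NormedSpace.exp ((t₀ - s) • A))ᵀ) i j)
    (hGinv : IsUnit G) :
    ∀ x₀ x_f : Fin n → ℝ, ∃ u : ℝ → Fin m → ℝ,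
      ContinuousOn u (Set.Icc t₀ t_f) ∧
      (NormedSpace.exp ((t_f - t₀) • A) *ᵥ x₀) +
        (fun i => ∫ s in t₀..t_f,
          (NormedSpace.exp ((t_f - s) • A) *ᵥ (B *ᵥ u s)) i) = x_f := by
  classical
  intro x₀ x_f
  set E := NormedSpace.exp ((t_f - t₀) • A) with hE
  set v : Fin n → ℝ := x₀ - (NormedSpace.exp ((t₀ - t_f) • A)) *ᵥ x_f with hv
  set c : Fin n → ℝ := G⁻¹ *ᵥ v with hc
  set M : ℝ → Matrix (Fin n) (Fin n) ℝ := fun s =>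
    NormedSpace.exp ((t₀ - s) • A) * B * Bᵀ * (NormedSpace.exp ((t₀ - s) • A))ᵀ with hM
  -- continuity of the matrix exponential path
  have hexp : Continuous fun s : ℝ => NormedSpace.exp ((t₀ - s) • A) := by
    letI : NormedRing (Matrix (Fin n) (Fin n) ℝ) := Matrix.linftyOpNormedRing
    letI : NormedAlgebra ℝ (Matrix (Fin n) (Fin n) ℝ) := Matrix.linftyOpNormedAlgebra
    letI : NormedAlgebra ℚ (Matrix (Fin n) (Fin n) ℝ) := Matrix.linftyOpNormedAlgebra
    exact NormedSpace.exp_continuous.comp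
      ((continuous_const.sub continuous_id).smul continuous_const)
  have hentry : ∀ i j, Continuous fun s : ℝ => NormedSpace.exp ((t₀ - s) • A) i j :=
    fun i j => (continuous_apply j).comp ((continuous_apply i).comp hexp)
  have hMc : Continuous fun s => M s :=
    ((hexp.matrix_mul continuous_const).matrix_mul continuous_const).matrix_mul
      hexp.matrix_transpose
  have hMentry : ∀ j k, Continuous fun s : ℝ => M s j k :=
    fun j k => (continuous_apply k).comp ((continuous_apply j).comp hMc)
  -- splitting of the exponential
  have hsplit : ∀ s : ℝ, NormedSpace.exp ((t_f - s) • A)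
      = E * NormedSpace.exp ((t₀ - s) • A) := by
    intro s
    have h : (t_f - s) • A = (t_f - t₀) • A + (t₀ - s) • A := by
      rw [← add_smul]; ring_nf
    rw [hE, h]
    exact Matrix.exp_add_of_commute _ _ (((Commute.refl A).smul_left _).smul_right _)
  refine ⟨fun s => -(Bᵀ *ᵥ ((NormedSpace.exp ((t₀ - s) • A))ᵀ *ᵥ c)), ?_, ?_⟩
  · apply Continuous.continuousOn
    apply continuous_pi
    intro k
    simp only [Pi.neg_apply, Matrix.mulVec, dotProduct, Matrix.transpose_apply]
    exact (continuous_finset_sum _ fun j _ =>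
      continuous_const.mul (continuous_finset_sum _ fun i _ =>
        (hentry i j).mul continuous_const)).neg
  · -- the integrand, rewritten
    have hintegrand : ∀ s : ℝ,
        (NormedSpace.exp ((t_f - s) • A) *ᵥ
          (B *ᵥ (-(Bᵀ *ᵥ ((NormedSpace.exp ((t₀ - s) • A))ᵀ *ᵥ c)))))
        = -((E * M s) *ᵥ c) := by
      intro s
      rw [hsplit s]
      simp [Matrix.mulVec_neg, Matrix.mulVec_mulVec, hM, Matrix.mul_assoc]
    have hint : (fun i => ∫ s in t₀..t_f,
        (NormedSpace.exp ((t_f - s) • A) *ᵥ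
          (B *ᵥ (fun s => -(Bᵀ *ᵥ ((NormedSpace.exp ((t₀ - s) • A))ᵀ *ᵥ c))) s)) i)
        = -(E *ᵥ (G *ᵥ c)) := by
      funext i
      simp only [hintegrand]
      have h1 : ∀ s : ℝ, (-((E * M s) *ᵥ c)) i
          = -(∑ k, (∑ j, E i j * M s j k) * c k) := by
        intro s
        simp [Matrix.mulVec, dotProduct, Matrix.mul_apply]
      simp only [h1]
      rw [intervalIntegral.integral_neg]
      rw [intervalIntegral.integral_finset_sum (f := fun k s => (∑ j, E i j * M s j k) * c k) (fun k _ =>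
        (((continuous_finset_sum _ fun j _ =>
          continuous_const.mul (hMentry j k)).mul continuous_const).intervalIntegrable _ _))]
      have h2 : ∀ k, (∫ s in t₀..t_f, (∑ j, E i j * M s j k) * c k)
          = (∑ j, E i j * (G j k)) * c k := by
        intro k
        rw [intervalIntegral.integral_mul_const,
          intervalIntegral.integral_finset_sum (f := fun j s => E i j * M s j k) (fun j _ =>
            ((continuous_const.mul (hMentry j k)).intervalIntegrable _ _))]
        congr 1
        refine Finset.sum_congr rfl fun j _ => ?_
        rw [intervalIntegral.integral_const_mul, hG]
        rfl
      simp only [h2]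
      simp [Matrix.mulVec, dotProduct, Matrix.mul_apply, Pi.neg_apply]
    rw [hint]
    -- now finish with linear algebra
    have hGc : G *ᵥ c = v := by
      rw [hc, Matrix.mulVec_mulVec,
        Matrix.mul_nonsing_inv G ((Matrix.isUnit_iff_isUnit_det G).mp hGinv),
        Matrix.one_mulVec]
    rw [hGc, hv, Matrix.mulVec_sub, Matrix.mulVec_mulVec]
    have hone : E * NormedSpace.exp ((t₀ - t_f) • A) = 1 := by
      rw [hE, ← Matrix.exp_add_of_commute _ _ (((Commute.refl A).smul_left _).smul_right _),
        ← add_smul]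
      norm_num
    rw [hone, Matrix.one_mulVec]
    funext i
    simp
end
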